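/- Absence of arbitrage via discounted net gains: Let Ĥ be a set of quantum states. The market model is quantum arbitrage-free relative to Ĥ if and only if for every ξ ∈ ℝ^d the following holds: if ⟨ψ|ξ·Y|ψ⟩ ≥ 0 for all ψ ∈ Ĥ with ⟨ψ|ρ|ψ⟩ > 0, then ⟨ψ|ξ·Y|ψ⟩ = 0 for all ψ ∈ Ĥ with ⟨ψ|ρ|ψ⟩ > 0. -/

import Mathlib

open Matrix
open scoped ComplexOrder

/-- Quadratic form ⟨ψ|M|ψ⟩ (real part of ψ*Mψ; a real number when M is Hermitian). -/
noncomputable def qf {K : ℕ} (M : Matrix (Fin K) (Fin K) ℂ) (ψ : Fin K → ℂ) : ℝ :=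
  (star ψ ⬝ᵥ (M *ᵥ ψ)).re

/-- A density operator: positive semidefinite (hence Hermitian) with trace 1. -/
def IsDensityOp {K : ℕ} (ρ : Matrix (Fin K) (Fin K) ℂ) : Prop :=
  ρ.PosSemidef ∧ ρ.trace = 1

/-- A quantum state: a unit vector of ℂ^K. -/
def IsState {K : ℕ} (ψ : Fin K → ℂ) : Prop := star ψ ⬝ᵥ ψ = 1

/-- σ ≪ ρ : every null vector of ρ is a null vector of σ. -/
def AbsCont {K : ℕ} (σ ρ : Matrix (Fin K) (Fin K) ℂ) : Prop :=
  ∀ ψ : Fin K → ℂ, ρ *ᵥ ψ = 0 → σ *ᵥ ψ = 0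

/-- ρ ≈ σ : mutual absolute continuity. -/
def EquivDO {K : ℕ} (ρ σ : Matrix (Fin K) (Fin K) ℂ) : Prop := AbsCont σ ρ ∧ AbsCont ρ σ

/-- A single-period market model with one risk-free asset (index 0) and d risky quantum
assets on the Hilbert space ℂ^K. -/
structure MarketModel (K d : ℕ) where
  /-- interest rate -/
  r : ℝ
  hr : -1 < r
  /-- today's prices π_0, …, π_d -/
  pi : Fin (d + 1) → ℝ
  hpi0 : pi 0 = 1
  hpi : ∀ i, 0 < pi i
  /-- the quantum assets S_0, …, S_d -/
  S : Fin (d + 1) → Matrix (Fin K) (Fin K) ℂ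
  hS : ∀ i, (S i).PosSemidef
  hS0 : S 0 = ((1 + r : ℝ) : ℂ) • (1 : Matrix (Fin K) (Fin K) ℂ)
  /-- the market density operator -/
  ρ : Matrix (Fin K) (Fin K) ℂ
  hρ : IsDensityOp ρ

/-- Combined payoff matrix ξ̄·S̄ of a portfolio. -/
noncomputable def payoff {K d : ℕ} (M : MarketModel K d) (ξ : Fin (d + 1) → ℝ) :
    Matrix (Fin K) (Fin K) ℂ :=
  ∑ i, (ξ i : ℂ) • M.S i

/-- Price ξ̄·π̄ of a portfolio. -/
noncomputable def priceOf {K d : ℕ} (M : MarketModel K d) (ξ : Fin (d + 1) → ℝ) : ℝ :=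
  ∑ i, ξ i * M.pi i

/-- A quantum arbitrage opportunity relative to a set H of allowable states. -/
def IsArbitrage {K d : ℕ} (M : MarketModel K d) (H : Set (Fin K → ℂ))
    (ξ : Fin (d + 1) → ℝ) : Prop :=
  priceOf M ξ ≤ 0 ∧
  (∀ ψ ∈ H, 0 < qf M.ρ ψ → 0 ≤ qf (payoff M ξ) ψ) ∧
  (∃ ψ ∈ H, 0 < qf M.ρ ψ ∧ 0 < qf (payoff M ξ) ψ)

/-- The market model is quantum arbitrage-free relative to H. -/
def ArbitrageFree {K d : ℕ} (M : MarketModel K d) (H : Set (Fin K → ℂ)) : Prop :=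
  ∀ ξ : Fin (d + 1) → ℝ, ¬ IsArbitrage M H ξ

/-- A risk-neutral (martingale) density operator: π_i = tr(ρ* S_i)/(1+r) for all i. -/
def IsRiskNeutral {K d : ℕ} (M : MarketModel K d) (ρstar : Matrix (Fin K) (Fin K) ℂ) : Prop :=
  IsDensityOp ρstar ∧
    ∀ i : Fin (d + 1), (M.pi i : ℂ) = (ρstar * M.S i).trace / ((1 + M.r : ℝ) : ℂ)

/-- The discounted net gain Y_i = S_i/(1+r) − π_i·I of the i-th risky asset (i = 1,…,d). -/
noncomputable def netGain {K d : ℕ} (M : MarketModel K d) (i : Fin d) :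
    Matrix (Fin K) (Fin K) ℂ :=
  (((1 + M.r : ℝ) : ℂ))⁻¹ • M.S i.succ - ((M.pi i.succ : ℝ) : ℂ) • (1 : Matrix (Fin K) (Fin K) ℂ)

lemma qf_add {K : ℕ} (A B : Matrix (Fin K) (Fin K) ℂ) (ψ : Fin K → ℂ) :
    qf (A + B) ψ = qf A ψ + qf B ψ := by
  simp [qf, Matrix.add_mulVec, dotProduct_add]

lemma qf_sub {K : ℕ} (A B : Matrix (Fin K) (Fin K) ℂ) (ψ : Fin K → ℂ) :
    qf (A - B) ψ = qf A ψ - qf B ψ := by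
  simp [qf, Matrix.sub_mulVec, dotProduct_sub]

lemma qf_smul {K : ℕ} (c : ℝ) (A : Matrix (Fin K) (Fin K) ℂ) (ψ : Fin K → ℂ) :
    qf ((c : ℂ) • A) ψ = c * qf A ψ := by
  simp [qf, Matrix.smul_mulVec, dotProduct_smul, Complex.mul_re]

lemma qf_one {K : ℕ} (ψ : Fin K → ℂ) (hψ : IsState ψ) : qf 1 ψ = 1 := by
  simp only [qf, Matrix.one_mulVec, IsState] at *
  rw [hψ]; simp

lemma qf_sum {K n : ℕ} (f : Fin n → Matrix (Fin K) (Fin K) ℂ) (ψ : Fin K → ℂ) :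
    qf (∑ i, f i) ψ = ∑ i, qf (f i) ψ := by
  classical
  induction (Finset.univ : Finset (Fin n)) using Finset.induction with
  | empty => simp [qf]
  | insert x s hx ih => simp [Finset.sum_insert hx, qf_add, ih]

lemma qf_key {K d : ℕ} (M : MarketModel K d) (ξ : Fin (d + 1) → ℝ) (ψ : Fin K → ℂ)
    (hψ : IsState ψ) :
    qf (payoff M ξ) ψ
      = (1 + M.r) * qf (∑ i : Fin d, ((ξ i.succ : ℝ) : ℂ) • netGain M i) ψ
        + (1 + M.r) * priceOf M ξ := by
  have h0 : (0:ℝ) < 1 + M.r := by linarith [M.hr]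
  have h : (1 + M.r : ℝ) ≠ 0 := ne_of_gt h0
  have step1 : qf (payoff M ξ) ψ
      = ξ 0 * (1 + M.r) + ∑ i : Fin d, ξ i.succ * qf (M.S i.succ) ψ := by
    simp only [payoff, Fin.sum_univ_succ, M.hS0]
    rw [qf_add, qf_smul, qf_smul, qf_one ψ hψ, qf_sum, mul_one]
    simp only [qf_smul]
  have hterm : ∀ i : Fin d, qf (((ξ i.succ : ℝ) : ℂ) • netGain M i) ψ
      = ξ i.succ * ((1 + M.r)⁻¹ * qf (M.S i.succ) ψ - M.pi i.succ) := by
    intro i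
    rw [qf_smul]
    congr 1
    simp only [netGain, qf_sub, qf_smul, ← Complex.ofReal_inv, qf_one ψ hψ, mul_one]
  have step2 : qf (∑ i : Fin d, ((ξ i.succ : ℝ) : ℂ) • netGain M i) ψ
      = ∑ i : Fin d, ξ i.succ * ((1 + M.r)⁻¹ * qf (M.S i.succ) ψ - M.pi i.succ) := by
    rw [qf_sum]; exact Finset.sum_congr rfl fun i _ => hterm i
  have step3 : priceOf M ξ = ξ 0 + ∑ i : Fin d, ξ i.succ * M.pi i.succ := by
    simp [priceOf, Fin.sum_univ_succ, M.hpi0]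
  rw [step1, step2, step3, Finset.mul_sum]
  have hsum : ∀ i : Fin d, (1 + M.r) * (ξ i.succ * ((1 + M.r)⁻¹ * qf (M.S i.succ) ψ - M.pi i.succ))
      = ξ i.succ * qf (M.S i.succ) ψ - (1 + M.r) * (ξ i.succ * M.pi i.succ) := by
    intro i; field_simp
  rw [Finset.sum_congr rfl fun i _ => hsum i, Finset.sum_sub_distrib, ← Finset.mul_sum]
  ring

/-- **Absence of arbitrage via discounted net gains.** The market model is quantum
arbitrage-free relative to Ĥ iff for every ξ ∈ ℝ^d, nonnegativity of ⟨ψ|ξ·Y|ψ⟩ on all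
ψ ∈ Ĥ with ⟨ψ|ρ|ψ⟩ > 0 forces ⟨ψ|ξ·Y|ψ⟩ = 0 on all such ψ. -/
theorem arbitrage_free_iff_net_gains
    (K d : ℕ) (hK : 1 ≤ K) (hd : 1 ≤ d) (M : MarketModel K d)
    (H : Set (Fin K → ℂ)) (hH : ∀ ψ ∈ H, IsState ψ) :
    ArbitrageFree M H ↔
      ∀ ξ : Fin d → ℝ,
        (∀ ψ ∈ H, 0 < qf M.ρ ψ → 0 ≤ qf (∑ i : Fin d, (ξ i : ℂ) • netGain M i) ψ) →
        (∀ ψ ∈ H, 0 < qf M.ρ ψ → qf (∑ i : Fin d, (ξ i : ℂ) • netGain M i) ψ = 0) := by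
  have h0 : (0:ℝ) < 1 + M.r := by linarith [M.hr]
  constructor
  · intro hAF ξ hnn ψ hψ hρψ
    by_contra hne
    have hgt : 0 < qf (∑ i : Fin d, (ξ i : ℂ) • netGain M i) ψ :=
      lt_of_le_of_ne (hnn ψ hψ hρψ) (Ne.symm hne)
    -- build portfolio
    set ξb : Fin (d+1) → ℝ := Fin.cons (-(∑ i : Fin d, ξ i * M.pi i.succ)) ξ with hξb
    have hsucc : ∀ i : Fin d, ξb i.succ = ξ i := fun i => Fin.cons_succ _ _ _
    have hprice : priceOf M ξb = 0 := by
      simp [priceOf, Fin.sum_univ_succ, hξb, Fin.cons_succ, M.hpi0]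
    apply hAF ξb
    refine ⟨le_of_eq hprice, ?_, ?_⟩
    · intro φ hφ hρφ
      rw [qf_key M ξb φ (hH φ hφ), hprice, mul_zero, add_zero]
      simp only [hsucc]
      exact mul_nonneg (le_of_lt h0) (hnn φ hφ hρφ)
    · refine ⟨ψ, hψ, hρψ, ?_⟩
      rw [qf_key M ξb ψ (hH ψ hψ), hprice, mul_zero, add_zero]
      simp only [hsucc]
      exact mul_pos h0 hgt
  · intro hcond ξb ⟨hprice, hnn, ψ0, hψ0, hρψ0, hpos⟩
    set ξ : Fin d → ℝ := fun i => ξb i.succ with hξ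
    have hnn' : ∀ ψ ∈ H, 0 < qf M.ρ ψ → 0 ≤ qf (∑ i : Fin d, (ξ i : ℂ) • netGain M i) ψ := by
      intro φ hφ hρφ
      have := hnn φ hφ hρφ
      rw [qf_key M ξb φ (hH φ hφ)] at this
      nlinarith
    have hz := hcond ξ hnn' ψ0 hψ0 hρψ0
    rw [qf_key M ξb ψ0 (hH ψ0 hψ0)] at hpos
    simp only [hξ] at hz
    nlinarith
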